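/- If X_1, ..., X_m are independent random variables, each geometrically distributed on {1,2,3,...} with success probability 1/k (hence mean k), and X = X_1 + ... + X_m, then for any λ > 0, Pr[X ≤ m(k - λ)] ≤ exp(-mλ²/(2k²)). -/

import Mathlib

set_option maxHeartbeats 1000000

open MeasureTheory ProbabilityTheory Real
open scoped ENNReal

lemma log_lb {u : ℝ} (hu0 : 0 ≤ u) (hu1 : u ≤ 1) :
    u - u^2/2 ≤ Real.log (1 + u) := by
  have hx0 : (0:ℝ) ≤ u - u^2/2 := by nlinarith
  have hx1 : u - u^2/2 ≤ 1 := by nlinarith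
  have hb := Real.exp_bound' hx0 hx1 (n := 3) (by norm_num)
  have hsum : (∑ m ∈ Finset.range 3, (u - u^2/2) ^ m / m.factorial) +
      (u - u^2/2) ^ 3 * (3 + 1) / ((3:ℕ).factorial * 3) ≤ 1 + u := by
    simp [Finset.sum_range_succ, Nat.factorial]
    nlinarith [sq_nonneg u, sq_nonneg (u - u^2/2)]
  rw [Real.le_log_iff_exp_le (by linarith)]
  exact hb.trans hsum

lemma geom_mgf_bound {k t : ℝ} (hk : 1 < k) (ht : 0 ≤ t) (htk : t * k^2 ≤ k - 1) :
    Real.exp (-t) / (k * (1 - (1 - 1/k) * Real.exp (-t))) ≤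
      Real.exp (-(k*t) + k^2*t^2/2) := by
  have hk0 : (0:ℝ) < k := by linarith
  set a := k - 1 with ha
  set e := Real.exp (-t) with he
  have he0 : 0 < e := Real.exp_pos _
  have he1 : e ≤ 1 := Real.exp_le_one_iff.2 (by linarith)
  have hden_eq : k * (1 - (1 - 1/k) * e) = 1 + a * (1 - e) := by
    field_simp; ring
  have ht1 : t ≤ 1 := by nlinarith
  have hq := Real.quadratic_le_exp_of_nonneg ht
  have hee : e * Real.exp t = 1 := by rw [he, ← Real.exp_add]; simp
  have h2 : e ≤ 1 - t + t^2/2 := by nlinarith [sq_nonneg (t^2)]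
  have h1 : 1 - e ≤ t := by nlinarith [Real.add_one_le_exp (-t)]
  set u := a * (1 - e) with hu
  have ha0 : 0 ≤ a := by linarith
  have haa : a^2 = k^2 - 2*k + 1 := by rw [ha]; ring
  have hu0 : 0 ≤ u := by nlinarith
  have hut : u ≤ a * t := by nlinarith
  have hat : a * t ≤ 1 := by nlinarith [mul_le_mul_of_nonneg_left htk ha0]
  have hu1 : u ≤ 1 := le_trans hut hat
  have hlog := log_lb hu0 hu1
  have hu₀0 : 0 ≤ a * (t - t^2/2) := mul_nonneg ha0 (by nlinarith)
  have hA : a * (t - t^2/2) ≤ u := by nlinarith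
  have hu₀1 : a * (t - t^2/2) ≤ 1 := le_trans hA hu1
  have h5 : (a*(t - t^2/2))^2 ≤ (a*t)^2 :=
    pow_le_pow_left₀ hu₀0 (by nlinarith : a * (t - t^2/2) ≤ a * t) 2
  have s1 : a*(t - t^2/2) - (a*(t - t^2/2))^2/2 ≤ u - u^2/2 := by
    nlinarith [mul_nonneg (sub_nonneg.2 hA)
      (by linarith : (0:ℝ) ≤ 1 - (u + a*(t - t^2/2))/2)]
  have s2 : a*t - k^2*t^2/2 ≤ a*(t - t^2/2) - (a*(t - t^2/2))^2/2 := by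
    nlinarith [h5, sq_nonneg t, mul_nonneg (mul_nonneg ha0 ht) ht]
  have hkey : a*t - k^2*t^2/2 ≤ u - u^2/2 := le_trans s2 s1
  have hexp : Real.exp (a*t - k^2*t^2/2) ≤ 1 + u := by
    rw [← Real.exp_log (by linarith : (0:ℝ) < 1 + u)]
    exact Real.exp_le_exp.2 (hkey.trans hlog)
  have hden : 0 < k * (1 - (1 - 1/k) * e) := by rw [hden_eq]; linarith
  rw [div_le_iff₀ hden, hden_eq]
  calc e = Real.exp (a*t - k^2*t^2/2) * Real.exp (-(k*t) + k^2*t^2/2) := by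
        rw [← Real.exp_add, he, ha]; ring_nf
    _ ≤ (1 + u) * Real.exp (-(k*t) + k^2*t^2/2) :=
        mul_le_mul_of_nonneg_right hexp (Real.exp_pos _).le
    _ = Real.exp (-(k*t) + k^2*t^2/2) * (1 + u) := mul_comm _ _

lemma geom_zero {Ω : Type*} [MeasurableSpace Ω] (μ : Measure Ω) [IsProbabilityMeasure μ]
    {k : ℝ} (hk : 1 ≤ k) (Y : Ω → ℕ) (hY : Measurable Y)
    (hg : ∀ j : ℕ, 1 ≤ j → μ {ω | Y ω = j} = ENNReal.ofReal ((1 - 1/k)^(j-1) * (1/k))) :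
    μ {ω | Y ω = 0} = 0 := by
  have hk0 : (0:ℝ) < k := lt_of_lt_of_le one_pos hk
  have hq0 : 0 ≤ 1 - 1/k := by
    have : 1/k ≤ 1 := by rw [div_le_one hk0]; exact hk
    linarith
  have hq1 : 1 - 1/k < 1 := by
    have : 0 < 1/k := by positivity
    linarith
  have huniv : (Set.univ : Set Ω) = ⋃ j : ℕ, {ω | Y ω = j} := by
    ext ω; simp
  have hmeasj : ∀ j : ℕ, MeasurableSet {ω | Y ω = j} := fun j =>
    hY (measurableSet_singleton j)
  have hdisj : Pairwise (Function.onFun Disjoint fun j : ℕ => {ω | Y ω = j}) := by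
    intro i j hij
    simp only [Function.onFun, Set.disjoint_left]
    intro ω hi hj
    exact hij (hi.symm.trans hj)
  have htot : (1 : ℝ≥0∞) = ∑' j : ℕ, μ {ω | Y ω = j} := by
    rw [← measure_univ (μ := μ), huniv, measure_iUnion hdisj hmeasj]
  have hsummable : Summable (fun n : ℕ => (1 - 1/k)^n * (1/k)) :=
    (summable_geometric_of_lt_one hq0 hq1).mul_right _
  have htail : ∑' n : ℕ, μ {ω | Y ω = n + 1} = 1 := by
    have : ∀ n : ℕ, μ {ω | Y ω = n + 1} = ENNReal.ofReal ((1 - 1/k)^n * (1/k)) := by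
      intro n
      rw [hg (n+1) (Nat.le_add_left 1 n)]
      norm_num
    rw [tsum_congr this, ← ENNReal.ofReal_tsum_of_nonneg
      (fun n => by positivity) hsummable]
    rw [tsum_mul_right, tsum_geometric_of_lt_one hq0 hq1]
    have : (1 - (1 - 1/k))⁻¹ * (1/k) = 1 := by
      field_simp
      ring
    rw [this, ENNReal.ofReal_one]
  rw [tsum_eq_zero_add' (by exact ENNReal.summable), htail] at htot
  have := htot.symm
  nth_rewrite 2 [show (1:ℝ≥0∞) = 0 + 1 by simp] at this
  exact WithTop.add_right_cancel (by exact ENNReal.one_ne_top) this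

lemma integrable_exp_neg {Ω : Type*} [MeasurableSpace Ω] (μ : Measure Ω)
    [IsProbabilityMeasure μ] {f : Ω → ℝ} (hf : Measurable f) (hf0 : ∀ ω, 0 ≤ f ω)
    {t : ℝ} (ht : 0 ≤ t) : Integrable (fun ω => Real.exp (-t * f ω)) μ := by
  refine Integrable.mono' (integrable_const 1)
    ((hf.const_mul (-t)).exp.aestronglyMeasurable) (ae_of_all _ fun ω => ?_)
  rw [Real.norm_eq_abs, abs_of_pos (Real.exp_pos _)]
  exact Real.exp_le_one_iff.2 (by nlinarith [hf0 ω])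

lemma geom_mgf {Ω : Type*} [MeasurableSpace Ω] (μ : Measure Ω) [IsProbabilityMeasure μ]
    {k : ℝ} (hk : 1 ≤ k) (Y : Ω → ℕ) (hY : Measurable Y)
    (hg : ∀ j : ℕ, 1 ≤ j → μ {ω | Y ω = j} = ENNReal.ofReal ((1 - 1/k)^(j-1) * (1/k)))
    (h0 : μ {ω | Y ω = 0} = 0)
    {t : ℝ} (ht : 0 < t) :
    mgf (fun ω => (Y ω : ℝ)) μ (-t) =
      Real.exp (-t) / (k * (1 - (1 - 1/k) * Real.exp (-t))) := by
  have hk0 : (0:ℝ) < k := lt_of_lt_of_le one_pos hk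
  have hq0 : 0 ≤ 1 - 1/k := by
    have : 1/k ≤ 1 := by rw [div_le_one hk0]; exact hk
    linarith
  have hq1 : 1 - 1/k < 1 := by
    have : 0 < 1/k := by positivity
    linarith
  have he0 : 0 < Real.exp (-t) := Real.exp_pos _
  have he1 : Real.exp (-t) < 1 := Real.exp_lt_one_iff.2 (by linarith)
  have hr0 : 0 ≤ (1 - 1/k) * Real.exp (-t) := by positivity
  have hr1 : (1 - 1/k) * Real.exp (-t) < 1 := by nlinarith
  have hYc : Measurable (fun ω => (Y ω : ℝ)) := measurable_from_top.comp hY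
  have hint : Integrable (fun ω => Real.exp (-t * (Y ω : ℝ))) μ :=
    integrable_exp_neg μ hYc (fun ω => Nat.cast_nonneg _) ht.le
  have hmap : ∀ j : ℕ, (Measure.map Y μ) {j} = μ {ω | Y ω = j} := by
    intro j
    rw [Measure.map_apply hY (measurableSet_singleton j)]
    rfl
  have hintm : Integrable (fun j : ℕ => Real.exp (-t * j)) (Measure.map Y μ) := by
    rw [integrable_map_measure (measurable_from_top.aestronglyMeasurable) hY.aemeasurable]
    exact hint
  have key : mgf (fun ω => (Y ω : ℝ)) μ (-t)
      = ∑' j : ℕ, ((Measure.map Y μ) {j}).toReal • Real.exp (-t * j) :=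
    ((integral_map hY.aemeasurable
      (measurable_from_top.aestronglyMeasurable (f := fun j : ℕ => Real.exp (-t * j)))).symm).trans
      (integral_countable' hintm)
  set g : ℕ → ℝ := fun j => ((Measure.map Y μ) {j}).toReal • Real.exp (-t * j) with hgdef
  have hg0 : g 0 = 0 := by
    simp [hgdef, hmap 0, h0]
  have hgs : ∀ n : ℕ, g (n + 1) = ((1 - 1/k) * Real.exp (-t))^n * (Real.exp (-t) * (1/k)) := by
    intro n
    have : μ {ω | Y ω = n + 1} = ENNReal.ofReal ((1 - 1/k)^n * (1/k)) := by
      rw [hg (n+1) (Nat.le_add_left 1 n)]; norm_num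
    rw [hgdef]
    simp only [hmap, this, smul_eq_mul]
    rw [ENNReal.toReal_ofReal (by positivity)]
    rw [show (-t * (↑(n+1) : ℝ)) = (n:ℝ) * (-t) + (-t) by push_cast; ring,
      Real.exp_add, Real.exp_nat_mul, mul_pow]
    ring
  have hsum : Summable (fun n : ℕ => g (n + 1)) := by
    rw [show (fun n : ℕ => g (n+1)) = fun n : ℕ => ((1 - 1/k) * Real.exp (-t))^n * (Real.exp (-t) * (1/k)) from funext hgs]
    exact (summable_geometric_of_lt_one hr0 hr1).mul_right _
  rw [key, tsum_eq_zero_add' hsum, hg0, tsum_congr hgs, tsum_mul_right,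
    tsum_geometric_of_lt_one hr0 hr1]
  have hne : 1 - (1 - 1/k) * Real.exp (-t) ≠ 0 := by linarith
  rw [zero_add, inv_mul_eq_div, div_eq_div_iff hne (by positivity : k * (1 - (1 - 1/k) * Real.exp (-t)) ≠ 0)]
  field_simp

/-- If `X 1, ..., X m` are independent geometric random variables on `{1,2,...}` with
success probability `1/k` (hence mean `k`), and `X = X 1 + ... + X m`, then for `λ > 0`,
`Pr[X ≤ m(k - λ)] ≤ exp(-mλ²/(2k²))`. -/
theorem geometric_sum_lower_tail
    {Ω : Type*} [MeasurableSpace Ω] (μ : Measure Ω) [IsProbabilityMeasure μ]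
    (m : ℕ) (k : ℝ) (hk : 1 ≤ k)
    (X : Fin m → Ω → ℕ)
    (hmeas : ∀ i, Measurable (X i))
    (hindep : iIndepFun X μ)
    (hgeom : ∀ i, ∀ j : ℕ, 1 ≤ j →
      μ {ω | X i ω = j} = ENNReal.ofReal ((1 - 1 / k) ^ (j - 1) * (1 / k)))
    (lam : ℝ) (hlam : 0 < lam) :
    μ {ω | (∑ i, (X i ω : ℝ)) ≤ m * (k - lam)} ≤
      ENNReal.ofReal (Real.exp (-(m : ℝ) * lam ^ 2 / (2 * k ^ 2))) := by
  have hk0 : (0:ℝ) < k := lt_of_lt_of_le one_pos hk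
  rcases Nat.eq_zero_or_pos m with hm | hm
  · subst hm
    have : {ω : Ω | (∑ i : Fin 0, (X i ω : ℝ)) ≤ (0:ℕ) * (k - lam)} = Set.univ := by
      ext ω; simp
    rw [this, measure_univ]
    norm_num
  have hzero : ∀ i, μ {ω | X i ω = 0} = 0 := fun i =>
    geom_zero μ hk (X i) (hmeas i) (hgeom i)
  by_cases hcase : k - lam < 1
  · -- event is null since each X i ≥ 1 a.s.
    have hsub : {ω | (∑ i, (X i ω : ℝ)) ≤ m * (k - lam)} ⊆ ⋃ i, {ω | X i ω = 0} := by
      intro ω hω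
      by_contra hcon
      simp only [Set.mem_iUnion, Set.mem_setOf_eq, not_exists] at hcon
      have hge : ∀ i, (1:ℝ) ≤ (X i ω : ℝ) := by
        intro i
        exact_mod_cast Nat.one_le_iff_ne_zero.2 (hcon i)
      have hsum : (m:ℝ) ≤ ∑ i, (X i ω : ℝ) := by
        calc (m:ℝ) = ∑ _i : Fin m, (1:ℝ) := by simp
          _ ≤ ∑ i, (X i ω : ℝ) := Finset.sum_le_sum fun i _ => hge i
      have hm' : (0:ℝ) < m := by exact_mod_cast hm
      have : (m:ℝ) * (k - lam) < m * 1 := by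
        exact mul_lt_mul_of_pos_left hcase hm'
      simp only [Set.mem_setOf_eq] at hω
      nlinarith
    have : μ {ω | (∑ i, (X i ω : ℝ)) ≤ m * (k - lam)} = 0 :=
      measure_mono_null hsub (measure_iUnion_null hzero)
    rw [this]
    exact zero_le
  -- main case
  push_neg at hcase
  have hk1 : 1 < k := by linarith
  set t := lam / k^2 with htdef
  have ht0 : 0 < t := div_pos hlam (by positivity)
  have htk : t * k^2 = lam := div_mul_cancel₀ _ (by positivity)
  have htk' : t * k^2 ≤ k - 1 := by rw [htk]; linarith
  set Y : Fin m → Ω → ℝ := fun i ω => (X i ω : ℝ) with hYdef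
  have hYmeas : ∀ i, Measurable (Y i) := fun i => measurable_from_top.comp (hmeas i)
  have hYindep : iIndepFun Y μ :=
    hindep.comp (fun _ (n : ℕ) => (n : ℝ)) (fun _ => measurable_from_top)
  have hYnn : ∀ i ω, 0 ≤ Y i ω := fun i ω => Nat.cast_nonneg _
  have hintS : Integrable (fun ω => Real.exp (-t * (∑ i, Y i) ω)) μ := by
    have heq : (fun ω => Real.exp (-t * (∑ i, Y i) ω)) =
        fun ω => Real.exp (-t * ∑ i, Y i ω) := by
      funext ω; rw [Finset.sum_apply]
    rw [heq]
    exact integrable_exp_neg μ (Finset.measurable_sum _ fun i _ => hYmeas i)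
      (fun ω => Finset.sum_nonneg fun i _ => hYnn i ω) ht0.le
  have hEeq : {ω | (∑ i, (X i ω : ℝ)) ≤ m * (k - lam)} =
      {ω | (∑ i, Y i) ω ≤ m * (k - lam)} := by
    ext ω; simp [hYdef, Finset.sum_apply]
  have chern := measure_le_le_exp_mul_mgf (μ := μ) (X := ∑ i, Y i)
    ((m:ℝ) * (k - lam)) (neg_nonpos.2 ht0.le) hintS
  rw [hYindep.mgf_sum hYmeas] at chern
  set M := Real.exp (-t) / (k * (1 - (1 - 1/k) * Real.exp (-t))) with hMdef
  have hmgf : ∀ i ∈ Finset.univ, mgf (Y i) μ (-t) = M := fun i _ =>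
    geom_mgf μ hk (X i) (hmeas i) (hgeom i) (hzero i) ht0
  rw [Finset.prod_congr rfl hmgf, Finset.prod_const, Finset.card_univ, Fintype.card_fin] at chern
  have hden : 0 < 1 - (1 - 1/k) * Real.exp (-t) := by
    have he1 : Real.exp (-t) ≤ 1 := Real.exp_le_one_iff.2 (by linarith)
    have hq0 : 0 ≤ 1 - 1/k := by
      have : 1/k ≤ 1 := by rw [div_le_one hk0]; exact hk
      linarith
    have hq1 : 1 - 1/k < 1 := by
      have : 0 < 1/k := by positivity
      linarith
    nlinarith [Real.exp_pos (-t)]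
  have hM0 : 0 ≤ M := by
    rw [hMdef]
    positivity
  have hMb : M ≤ Real.exp (-(k*t) + k^2*t^2/2) := geom_mgf_bound hk1 ht0.le htk'
  have hfinal : Real.exp (-(-t) * ((m:ℝ) * (k - lam))) * M ^ m ≤
      Real.exp (-(m : ℝ) * lam ^ 2 / (2 * k ^ 2)) := by
    calc Real.exp (-(-t) * ((m:ℝ) * (k - lam))) * M ^ m
        ≤ Real.exp (-(-t) * ((m:ℝ) * (k - lam))) * (Real.exp (-(k*t) + k^2*t^2/2)) ^ m :=
          mul_le_mul_of_nonneg_left (pow_le_pow_left₀ hM0 hMb m) (Real.exp_pos _).le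
      _ = Real.exp (t * ((m:ℝ) * (k - lam)) + m * (-(k*t) + k^2*t^2/2)) := by
          rw [← Real.exp_nat_mul, ← Real.exp_add, neg_neg]
      _ = Real.exp (-(m : ℝ) * lam ^ 2 / (2 * k ^ 2)) := by
          congr 1
          rw [htdef]
          field_simp
          ring
  rw [hEeq, ← ENNReal.ofReal_toReal (measure_ne_top μ _)]
  exact ENNReal.ofReal_le_ofReal (chern.trans hfinal)
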